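/- Let K be a positive semidefinite n×n complex matrix with Tr(K) = 1, and let H be a Hermitian n×n complex matrix. With S(K) = ∑_l η(λ_l(K)) (η(t) = −t log t, η(0) = 0), equality S(K) − Re(Tr(K·H)) = log Tr(exp(−H)) holds if and only if K = (Tr(exp(−H)))⁻¹ · exp(−H). -/

import Mathlib

open scoped ComplexOrder
open Matrix

/-- The entropy function `η(t) = −t log t` (with `η(0) = 0`). -/
noncomputable def eta (t : ℝ) : ℝ := -(t * Real.log t)

/-- The von Neumann entropy `S(K) = ∑_l η(λ_l(K))` of a Hermitian matrix `K`, where the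
`λ_l(K)` are the eigenvalues with multiplicity (junk value `0` for non-Hermitian matrices). -/
noncomputable def vnEntropy {n : Type*} [Fintype n] [DecidableEq n] (K : Matrix n n ℂ) : ℝ :=
  if hK : K.IsHermitian then ∑ i, eta (hK.eigenvalues i) else 0

noncomputable def kf (a b : ℝ) : ℝ := a * Real.log a - a * Real.log b - a + b

lemma kf_nonneg {a b : ℝ} (ha : 0 ≤ a) (hb : 0 < b) : 0 ≤ kf a b := by
  rcases ha.eq_or_lt with h | h
  · simp [kf, ← h]; linarith
  · have hlog : Real.log (b / a) ≤ b / a - 1 := Real.log_le_sub_one_of_pos (by positivity)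
    have hld : Real.log (b / a) = Real.log b - Real.log a := Real.log_div hb.ne' h.ne'
    have hba : a * (b / a) = b := by field_simp
    unfold kf
    nlinarith [mul_le_mul_of_nonneg_left hlog h.le]

lemma kf_eq_zero_iff {a b : ℝ} (ha : 0 ≤ a) (hb : 0 < b) : kf a b = 0 ↔ a = b := by
  constructor
  · intro h0
    by_contra hne
    rcases ha.eq_or_lt with h | h
    · rw [kf, ← h] at h0; simp at h0; exact hb.ne' h0
    · have h1 : b / a ≠ 1 := by
        intro hh
        exact hne (by field_simp at hh; linarith)
      have hlog : Real.log (b / a) < b / a - 1 :=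
        Real.log_lt_sub_one_of_pos (by positivity) h1
      have hld : Real.log (b / a) = Real.log b - Real.log a := Real.log_div hb.ne' h.ne'
      have hba : a * (b / a) = b := by field_simp
      unfold kf at h0
      nlinarith [mul_lt_mul_of_pos_left hlog h]
  · rintro rfl
    simp [kf]

lemma klein_sum {m n : Type*} [Fintype m] [Fintype n] [Nonempty n]
    (c : m → n → ℝ) (μ : m → ℝ) (lam : n → ℝ)
    (hrow : ∀ j, ∑ i, c j i = 1) (hcol : ∀ i, ∑ j, c j i = 1)
    (hμ1 : ∑ j, μ j = 1) :
    ∑ j, ∑ i, c j i * kf (μ j) (Real.exp (-lam i) / (∑ k, Real.exp (-lam k)))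
      = Real.log (∑ k, Real.exp (-lam k))
        - ((∑ j, eta (μ j)) - ∑ j, ∑ i, c j i * (μ j * lam i)) := by
  set Z : ℝ := ∑ k, Real.exp (-lam k) with hZdef
  have hZ : 0 < Z := Finset.sum_pos (fun k _ => Real.exp_pos _) Finset.univ_nonempty
  have hlog : ∀ i, Real.log (Real.exp (-lam i) / Z) = -lam i - Real.log Z := by
    intro i
    rw [Real.log_div (Real.exp_pos _).ne' hZ.ne', Real.log_exp]
  have key : ∀ j i, c j i * kf (μ j) (Real.exp (-lam i) / Z)
      = c j i * (μ j * Real.log (μ j)) + c j i * (μ j * lam i)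
        + c j i * (μ j * Real.log Z) - c j i * μ j + c j i * (Real.exp (-lam i) / Z) := by
    intro j i
    rw [kf, hlog]
    ring
  have h1 : ∑ j, ∑ i, c j i * (μ j * Real.log (μ j)) = ∑ j, μ j * Real.log (μ j) := by
    refine Finset.sum_congr rfl fun j _ => ?_
    rw [← Finset.sum_mul, hrow, one_mul]
  have h3 : ∑ j, ∑ i, c j i * μ j = 1 := by
    rw [← hμ1]
    refine Finset.sum_congr rfl fun j _ => ?_
    rw [← Finset.sum_mul, hrow, one_mul]
  have h5 : ∑ j, ∑ i, c j i * (μ j * Real.log Z) = Real.log Z := by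
    have : ∀ j, ∑ i, c j i * (μ j * Real.log Z) = μ j * Real.log Z := by
      intro j; rw [← Finset.sum_mul, hrow, one_mul]
    rw [Finset.sum_congr rfl fun j _ => this j, ← Finset.sum_mul, hμ1, one_mul]
  have h4 : ∑ j, ∑ i, c j i * (Real.exp (-lam i) / Z) = 1 := by
    rw [Finset.sum_comm]
    have : ∀ i, ∑ j, c j i * (Real.exp (-lam i) / Z) = Real.exp (-lam i) / Z := by
      intro i; rw [← Finset.sum_mul, hcol, one_mul]
    rw [Finset.sum_congr rfl fun i _ => this i, ← Finset.sum_div, ← hZdef, div_self hZ.ne']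
  have heta : ∑ j, eta (μ j) = -∑ j, μ j * Real.log (μ j) := by
    simp [eta]
  calc ∑ j, ∑ i, c j i * kf (μ j) (Real.exp (-lam i) / Z)
      = ∑ j, ∑ i, (c j i * (μ j * Real.log (μ j)) + c j i * (μ j * lam i)
        + c j i * (μ j * Real.log Z) - c j i * μ j + c j i * (Real.exp (-lam i) / Z)) := by
        exact Finset.sum_congr rfl fun j _ => Finset.sum_congr rfl fun i _ => key j i
    _ = (∑ j, ∑ i, c j i * (μ j * Real.log (μ j))) + (∑ j, ∑ i, c j i * (μ j * lam i))
        + (∑ j, ∑ i, c j i * (μ j * Real.log Z)) - (∑ j, ∑ i, c j i * μ j)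
        + (∑ j, ∑ i, c j i * (Real.exp (-lam i) / Z)) := by
        simp [Finset.sum_add_distrib, Finset.sum_sub_distrib]
    _ = _ := by rw [h1, h3, h4, h5, heta]; ring

lemma exp_neg_herm {n : Type*} [Fintype n] [DecidableEq n] (H : Matrix n n ℂ) (hH : H.IsHermitian) :
    NormedSpace.exp (-H) = (hH.eigenvectorUnitary : Matrix n n ℂ) *
      diagonal (fun i => (Real.exp (-hH.eigenvalues i) : ℂ)) *
      star (hH.eigenvectorUnitary : Matrix n n ℂ) := by
  set V : Matrix n n ℂ := (hH.eigenvectorUnitary : Matrix n n ℂ) with hV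
  have h1 : V * star V = 1 := (Matrix.mem_unitaryGroup_iff).mp hH.eigenvectorUnitary.2
  have hu : IsUnit V := ⟨Unitary.toUnits hH.eigenvectorUnitary, rfl⟩
  have hinv : V⁻¹ = star V := Matrix.inv_eq_right_inv h1
  have hneg : -H = V * diagonal (fun i => (-hH.eigenvalues i : ℂ)) * V⁻¹ := by
    rw [hinv]
    conv_lhs => rw [hH.spectral_theorem]
    simp only [Matrix.neg_mul, Matrix.mul_neg, ← Matrix.diagonal_neg]
    congr 2
  have hconj := Matrix.exp_conj V (diagonal fun i => (-hH.eigenvalues i : ℂ)) hu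
  have hfun : (NormedSpace.exp fun i => (-hH.eigenvalues i : ℂ)) =
      fun i => (Real.exp (-hH.eigenvalues i) : ℂ) := by
    rw [Pi.exp_def]
    funext i
    rw [← Complex.exp_eq_exp_ℂ, ← Complex.ofReal_neg, Complex.ofReal_exp]
  rw [hneg, hconj, Matrix.exp_diagonal, hfun, hinv]

lemma trace_conj_diag {n : Type*} [Fintype n] [DecidableEq n] (v : Matrix n n ℂ)
    (hv : star v * v = 1) (d : n → ℂ) :
    (v * diagonal d * star v).trace = ∑ i, d i := by
  rw [trace_mul_cycle, hv, Matrix.one_mul, trace_diagonal]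

lemma trace_conj_mul_conj {n : Type*} [Fintype n] [DecidableEq n] (v u : Matrix n n ℂ)
    (d e : n → ℂ) :
    ((v * diagonal d * star v) * (u * diagonal e * star u)).trace
      = ∑ j, ∑ i, d j * e i * ((star v * u) j i * star ((star v * u) j i)) := by
  have h1 : (v * diagonal d * star v) * (u * diagonal e * star u)
      = v * (diagonal d * star v * u * diagonal e * star u) := by
    simp only [Matrix.mul_assoc]
  have h2 : (diagonal d * star v * u * diagonal e * star u) * v
      = diagonal d * (star v * u) * diagonal e * star (star v * u) := by
    rw [StarMul.star_mul, star_star]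
    simp only [Matrix.mul_assoc]
  rw [h1, trace_mul_comm, h2, Matrix.trace]
  refine Finset.sum_congr rfl fun j _ => ?_
  rw [Matrix.diag_apply, Matrix.mul_apply]
  refine Finset.sum_congr rfl fun i _ => ?_
  rw [Matrix.mul_diagonal, Matrix.diagonal_mul, Matrix.star_apply]
  ring

theorem variational_principle_equality_iff {n : Type*} [Fintype n] [DecidableEq n]
    (K H : Matrix n n ℂ) (hK : K.PosSemidef) (htr : K.trace = 1) (hH : H.IsHermitian) :
    vnEntropy K - ((K * H).trace).re = Real.log (((NormedSpace.exp (-H)).trace).re) ↔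
      K = ((NormedSpace.exp (-H)).trace)⁻¹ • NormedSpace.exp (-H) := by
  have hne : Nonempty n := by
    by_contra h
    rw [not_nonempty_iff] at h
    rw [Matrix.trace] at htr
    simp [Finset.univ_eq_empty] at htr
  have hKh : K.IsHermitian := hK.1
  set v : Matrix n n ℂ := (hKh.eigenvectorUnitary : Matrix n n ℂ) with hvdef
  set u : Matrix n n ℂ := (hH.eigenvectorUnitary : Matrix n n ℂ) with hudef
  set μ : n → ℝ := hKh.eigenvalues with hμdef
  set lam : n → ℝ := hH.eigenvalues with hlamdef
  have hv1 : star v * v = 1 := (Matrix.mem_unitaryGroup_iff').mp hKh.eigenvectorUnitary.2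
  have hv2 : v * star v = 1 := (Matrix.mem_unitaryGroup_iff).mp hKh.eigenvectorUnitary.2
  have hu1 : star u * u = 1 := (Matrix.mem_unitaryGroup_iff').mp hH.eigenvectorUnitary.2
  have hu2 : u * star u = 1 := (Matrix.mem_unitaryGroup_iff).mp hH.eigenvectorUnitary.2
  have hKspec : K = v * diagonal (fun j => (μ j : ℂ)) * star v := hKh.spectral_theorem
  set W : Matrix n n ℂ := star v * u with hWdef
  set c : n → n → ℝ := fun j i => Complex.normSq (W j i) with hcdef
  set Z : ℝ := ∑ k, Real.exp (-lam k) with hZdef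
  have hZ : 0 < Z := Finset.sum_pos (fun k _ => Real.exp_pos _) Finset.univ_nonempty
  set ν : n → ℝ := fun i => Real.exp (-lam i) / Z with hνdef
  have hν : ∀ i, 0 < ν i := fun i => div_pos (Real.exp_pos _) hZ
  -- row sums of c
  have hWW : W * star W = 1 := by
    rw [hWdef, StarMul.star_mul, star_star, Matrix.mul_assoc, ← Matrix.mul_assoc u,
      hu2, Matrix.one_mul, hv1]
  have hWW' : star W * W = 1 := by
    rw [hWdef, StarMul.star_mul, star_star, Matrix.mul_assoc, ← Matrix.mul_assoc v,
      hv2, Matrix.one_mul, hu1]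
  have hrow : ∀ j, ∑ i, c j i = 1 := by
    intro j
    have h := congrArg (fun M : Matrix n n ℂ => M j j) hWW
    simp only [Matrix.mul_apply, Matrix.one_apply_eq, Matrix.star_apply] at h
    have h2 : ∀ i, W j i * star (W j i) = ((c j i : ℝ) : ℂ) := fun i => Complex.mul_conj _
    rw [Finset.sum_congr rfl fun i _ => h2 i] at h
    exact_mod_cast h
  have hcol : ∀ i, ∑ j, c j i = 1 := by
    intro i
    have h := congrArg (fun M : Matrix n n ℂ => M i i) hWW'
    simp only [Matrix.mul_apply, Matrix.one_apply_eq, Matrix.star_apply] at h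
    have h2 : ∀ j, star (W j i) * W j i = ((c j i : ℝ) : ℂ) := fun j => by
      rw [mul_comm]; exact Complex.mul_conj _
    rw [Finset.sum_congr rfl fun j _ => h2 j] at h
    exact_mod_cast h
  have hμ0 : ∀ j, 0 ≤ μ j := fun j => hK.eigenvalues_nonneg j
  have hμ1 : ∑ j, μ j = 1 := by
    have := trace_conj_diag v hv1 (fun j => (μ j : ℂ))
    rw [← hKspec, htr] at this
    have h2 : ((∑ j, μ j : ℝ) : ℂ) = 1 := by push_cast; exact this.symm
    exact_mod_cast h2
  -- trace of exp(-H)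
  have htrexp : (NormedSpace.exp (-H)).trace = (Z : ℂ) := by
    rw [exp_neg_herm H hH, trace_conj_diag u hu1, hZdef]
    rw [Complex.ofReal_sum]
  have hre : ((NormedSpace.exp (-H)).trace).re = Z := by rw [htrexp, Complex.ofReal_re]
  -- trace of K*H
  have htrKH : ((K * H).trace).re = ∑ j, ∑ i, c j i * (μ j * lam i) := by
    have h1 : K * H = (v * diagonal (fun j => (μ j : ℂ)) * star v)
        * (u * diagonal (fun i => (lam i : ℂ)) * star u) := by
      rw [← hKspec]
      congr 1
      exact hH.spectral_theorem
    rw [h1, trace_conj_mul_conj]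
    have h2 : ∀ j i, ((μ j : ℂ)) * (lam i : ℂ) * (W j i * star (W j i))
        = (((c j i * (μ j * lam i) : ℝ)) : ℂ) := by
      intro j i
      rw [Complex.star_def, Complex.mul_conj]
      push_cast
      ring
    rw [Finset.sum_congr rfl fun j _ => Finset.sum_congr rfl fun i _ => h2 j i]
    simp only [← Complex.ofReal_sum, Complex.ofReal_re]
  -- Gibbs state
  set Dν : Matrix n n ℂ := diagonal (fun i => (ν i : ℂ)) with hDνdef
  set Dμ : Matrix n n ℂ := diagonal (fun j => (μ j : ℂ)) with hDμdef
  have hG : ((NormedSpace.exp (-H)).trace)⁻¹ • NormedSpace.exp (-H)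
      = u * Dν * star u := by
    rw [htrexp, exp_neg_herm H hH]
    have hd : ((Z : ℂ))⁻¹ • diagonal (fun i => (Real.exp (-lam i) : ℂ)) = Dν := by
      rw [← Matrix.diagonal_smul, hDνdef]
      refine congrArg diagonal ?_
      funext i
      simp only [Pi.smul_apply, smul_eq_mul, hνdef, Complex.ofReal_div, div_eq_inv_mul]
      push_cast
      ring
    rw [← hd, Matrix.mul_smul, Matrix.smul_mul]
  have hcancel : ∀ M : Matrix n n ℂ, v * (star v * M * u) * star u = M := by
    intro M
    calc v * (star v * M * u) * star u = v * star v * M * (u * star u) := by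
          simp only [Matrix.mul_assoc]
      _ = M := by rw [hv2, hu2, Matrix.one_mul, Matrix.mul_one]
  have hA : star v * K * u = Dμ * W := by
    rw [hKspec]
    simp only [Matrix.mul_assoc]
    rw [← Matrix.mul_assoc (star v) v, hv1, Matrix.one_mul]
  have hB : star v * (u * Dν * star u) * u = W * Dν := by
    simp only [Matrix.mul_assoc]
    rw [hu1, Matrix.mul_one, ← Matrix.mul_assoc]
  have hiff1 : K = u * Dν * star u ↔ Dμ * W = W * Dν := by
    constructor
    · intro h
      rw [← hA, ← hB, h]
    · intro h
      have h2 := congrArg (fun M => v * M * star u) (hA.trans (h.trans hB.symm))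
      rw [hcancel, hcancel] at h2
      exact h2
  have hiff2 : Dμ * W = W * Dν ↔ ∀ j i, W j i = 0 ∨ μ j = ν i := by
    rw [← Matrix.ext_iff]
    constructor
    · intro h j i
      by_cases hW : W j i = 0
      · exact Or.inl hW
      · right
        have h' := h j i
        rw [hDμdef, hDνdef, Matrix.diagonal_mul, Matrix.mul_diagonal] at h'
        have hz : ((μ j : ℂ) - (ν i : ℂ)) * W j i = 0 := by linear_combination h'
        rcases mul_eq_zero.mp hz with h0 | h0
        · exact_mod_cast sub_eq_zero.mp h0
        · exact absurd h0 hW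
    · intro h j i
      rw [hDμdef, hDνdef, Matrix.diagonal_mul, Matrix.mul_diagonal]
      rcases h j i with h0 | h0
      · rw [h0, mul_zero, zero_mul]
      · rw [h0, mul_comm]
  -- Klein sum
  have hF := klein_sum c μ lam hrow hcol hμ1
  rw [← hZdef] at hF
  have hνe : ∀ i : n, Real.exp (-lam i) / Z = ν i := fun i => rfl
  simp only [hνe] at hF
  have hS : vnEntropy K = ∑ j, eta (μ j) := by
    unfold vnEntropy
    rw [dif_pos hKh]
  have hFnonneg : ∀ j i, 0 ≤ c j i * kf (μ j) (ν i) := fun j i =>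
    mul_nonneg (Complex.normSq_nonneg _) (kf_nonneg (hμ0 j) (hν i))
  have hF0 : (∑ j, ∑ i, c j i * kf (μ j) (ν i)) = 0 ↔ ∀ j i, W j i = 0 ∨ μ j = ν i := by
    rw [Finset.sum_eq_zero_iff_of_nonneg
      (fun j _ => Finset.sum_nonneg fun i _ => hFnonneg j i)]
    constructor
    · intro h j i
      have h2 := (Finset.sum_eq_zero_iff_of_nonneg (fun i _ => hFnonneg j i)).mp
        (h j (Finset.mem_univ j)) i (Finset.mem_univ i)
      rcases mul_eq_zero.mp h2 with h0 | h0
      · left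
        exact Complex.normSq_eq_zero.mp h0
      · right
        exact (kf_eq_zero_iff (hμ0 j) (hν i)).mp h0
    · intro h j _
      refine Finset.sum_eq_zero fun i _ => ?_
      rcases h j i with h0 | h0
      · have : c j i = 0 := Complex.normSq_eq_zero.mpr h0
        rw [this, zero_mul]
      · rw [(kf_eq_zero_iff (hμ0 j) (hν i)).mpr h0, mul_zero]
  rw [hre, hS, htrKH, hG]
  constructor
  · intro heq
    refine hiff1.mpr (hiff2.mpr (hF0.mp ?_))
    rw [hF]
    linarith
  · intro hKG
    have h4 := hF0.mpr (hiff2.mp (hiff1.mp hKG))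
    rw [hF] at h4
    linarith
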